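/- Let P(t) = (t−1)^L (t+1)^K P*(t) be a reciprocal polynomial with P*(±1) ≠ 0, and let P̃(t) = (t−1)^{2⌊L/2⌋}(t+1)^{2⌊K/2⌋}P*(t). Then Z(I_P) = { p(t)e + p(t^{−1})f + q(t)h ∈ OA : P̃ | p and P | q }. Consequently I_P is a closed ideal if and only if L and K are both even. -/

import Mathlib

open LaurentPolynomial

noncomputable section

namespace Onsager

/-- Laurent polynomials over ℂ, i.e. the ring `ℂ[t,t⁻¹]`. -/
abbrev R : Type := LaurentPolynomial ℂ

/-- The involution `t ↦ t⁻¹` of `ℂ[t,t⁻¹]`. -/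
abbrev inv : R ≃ₐ[ℂ] R := LaurentPolynomial.invert

/-- The loop algebra of `gl₂`: 2×2 matrices over `ℂ[t,t⁻¹]`.  The loop algebra
`L(sl₂) = ℂ[t,t⁻¹] ⊗ sl₂` is its Lie subalgebra of traceless matrices. -/
abbrev Loop : Type := Matrix (Fin 2) (Fin 2) R

/-- The standard generator `e` of `sl₂`, viewed inside the loop algebra. -/
def e : Loop := !![0, 1; 0, 0]
/-- The standard generator `f` of `sl₂`. -/
def f : Loop := !![0, 0; 1, 0]
/-- The standard generator `h` of `sl₂`. -/
def h : Loop := !![1, 0; 0, -1]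

/-- The element `p(t)e + q(t)f + r(t)h` of the loop algebra. -/
def elt (p q r : R) : Loop := p • e + q • f + r • h

lemma elt_eq (p q r : R) : elt p q r = !![r, p; q, -r] := by
  ext i j
  fin_cases i <;> fin_cases j <;> simp [elt, e, f, h]

/-- The swap matrix implementing the involution `θ` of `sl₂`. -/
def Sw : Loop := !![0, 1; 1, 0]

/-- The involution `θ̂` of the loop algebra, `θ̂(p(t) ⊗ x) = p(t⁻¹) ⊗ θ(x)`,
where `θ(e) = f`, `θ(f) = e`, `θ(h) = -h`. -/
def thetaHat (x : Loop) : Loop := Sw * x.map inv * Sw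

lemma Sw_mul_Sw : Sw * Sw = 1 := by
  ext i j
  fin_cases i <;> fin_cases j <;>
    simp [Sw, Matrix.mul_apply, Fin.sum_univ_two, Matrix.one_apply]

lemma map_inv_eq (x : Loop) : x.map inv = (AlgEquiv.mapMatrix (R := ℂ) inv) x := rfl

lemma thetaHat_mul (x y : Loop) : thetaHat (x * y) = thetaHat x * thetaHat y := by
  simp only [thetaHat, map_inv_eq, map_mul]
  calc Sw * (inv.mapMatrix x * inv.mapMatrix y) * Sw
      = Sw * inv.mapMatrix x * (Sw * Sw) * (inv.mapMatrix y * Sw) := by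
        rw [Sw_mul_Sw]; noncomm_ring
    _ = Sw * inv.mapMatrix x * Sw * (Sw * (inv.mapMatrix y * Sw)) := by noncomm_ring
    _ = _ := by noncomm_ring

lemma thetaHat_add (x y : Loop) : thetaHat (x + y) = thetaHat x + thetaHat y := by
  simp only [thetaHat, map_inv_eq, map_add, mul_add, add_mul]

lemma thetaHat_sub (x y : Loop) : thetaHat (x - y) = thetaHat x - thetaHat y := by
  simp only [thetaHat, map_inv_eq, map_sub, mul_sub, sub_mul]

lemma thetaHat_smul (c : ℂ) (x : Loop) : thetaHat (c • x) = c • thetaHat x := by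
  simp only [thetaHat, map_inv_eq, map_smul, Matrix.smul_mul, Matrix.mul_smul]

attribute [local instance 100] LieRing.ofAssociativeRing

/-- The Onsager algebra, realized as the subalgebra of the loop algebra of `sl₂`
fixed by the involution `θ̂`. -/
def OASub : LieSubalgebra ℂ Loop where
  carrier := {x | thetaHat x = x ∧ Matrix.trace x = 0}
  add_mem' := by
    rintro x y ⟨hx1, hx2⟩ ⟨hy1, hy2⟩
    exact ⟨by rw [thetaHat_add, hx1, hy1], by simp [hx2, hy2]⟩
  zero_mem' := by
    constructor
    · have := thetaHat_smul 0 0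
      simpa using this
    · simp
  smul_mem' := by
    rintro c x ⟨hx1, hx2⟩
    exact ⟨by rw [thetaHat_smul, hx1], by simp [hx2]⟩
  lie_mem' := by
    rintro x y ⟨hx1, hx2⟩ ⟨hy1, hy2⟩
    constructor
    · rw [Ring.lie_def, thetaHat_sub, thetaHat_mul, thetaHat_mul, hx1, hy1]
    · rw [Ring.lie_def]
      simp [Matrix.trace_mul_comm x y]

/-- The Onsager algebra as a type (a Lie algebra over ℂ). -/
abbrev OA : Type := ↥OASub

/-- For a polynomial `P(t)`, the ideal `I_P` of the Onsager algebra consisting of the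
elements `p(t)e + p(t⁻¹)f + q(t)h` with `P | p` and `P | q`. -/
def IP (P : Polynomial ℂ) : LieIdeal ℂ OA where
  carrier := {X | ∀ i j, P.toLaurent ∣ (X : Loop) i j}
  add_mem' := by
    intro x y hx hy i j
    simpa using dvd_add (hx i j) (hy i j)
  zero_mem' := by intro i j; simp
  smul_mem' := by
    intro c x hx i j
    have : ((c • x : OA) : Loop) i j = c • ((x : Loop) i j) := rfl
    rw [this, Algebra.smul_def]
    exact (hx i j).mul_left _
  lie_mem := by
    intro x m hm i j
    have hco : ((⁅x, m⁆ : OA) : Loop) = ⁅(x : Loop), (m : Loop)⁆ := rfl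
    rw [hco, Ring.lie_def]
    have h1 : P.toLaurent ∣ ((x : Loop) * (m : Loop)) i j := by
      rw [Matrix.mul_apply]
      exact Finset.dvd_sum fun k _ => (hm k j).mul_left _
    have h2 : P.toLaurent ∣ ((m : Loop) * (x : Loop)) i j := by
      rw [Matrix.mul_apply]
      exact Finset.dvd_sum fun k _ => (hm i k).mul_right _
    simpa using dvd_sub h1 h2

/-- A nonconstant monic polynomial `P` of degree `d` is *reciprocal* if
`P(t) = ± t^d P(t⁻¹)`. -/
def IsReciprocal (P : Polynomial ℂ) : Prop :=
  P.Monic ∧ 0 < P.natDegree ∧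
    (P.toLaurent = T (P.natDegree : ℤ) * inv P.toLaurent ∨
     P.toLaurent = -(T (P.natDegree : ℤ) * inv P.toLaurent))

/-- The elementary reciprocal polynomial `U_a`. -/
def U (a : ℂ) : Polynomial ℂ :=
  if a = 1 ∨ a = -1 then Polynomial.X - Polynomial.C a
  else Polynomial.X ^ 2 - Polynomial.C (a + a⁻¹) * Polynomial.X + 1

/-- Evaluation of a Laurent polynomial at a nonzero complex number. -/
def evalL (a : ℂ) (p : R) : ℂ := p.coeff.sum fun n c => c * a ^ n

/-- Evaluation `ev_a` of loop-algebra elements at `t = a`. -/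
def ev (a : ℂ) (x : Loop) : Matrix (Fin 2) (Fin 2) ℂ := x.map (evalL a)

/-- The element `A_m = 2t^m e + 2t^{-m} f` of the loop algebra. -/
def AmL (m : ℤ) : Loop := elt (2 * T m) (2 * T (-m)) 0

/-- The element `G_m = (t^m - t^{-m}) h` of the loop algebra. -/
def GmL (m : ℤ) : Loop := elt 0 0 (T m - T (-m))

lemma thetaHat_elt (p q r : R) :
    thetaHat (elt p q r) = elt (inv q) (inv p) (-(inv r)) := by
  rw [elt_eq, elt_eq]
  have hmap : (!![r, p; q, -r] : Loop).map ⇑inv = !![inv r, inv p; inv q, -(inv r)] := by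
    ext i j
    fin_cases i <;> fin_cases j <;> simp [Matrix.map_apply]
  rw [thetaHat, hmap, Sw]
  ext i j
  fin_cases i <;> fin_cases j <;>
    simp [Matrix.mul_apply, Fin.sum_univ_two]

lemma elt_mem (p r : R) (hr : inv r = -r) : elt p (inv p) r ∈ OASub := by
  constructor
  · rw [thetaHat_elt, hr, neg_neg, LaurentPolynomial.involutive_invert p]
  · rw [elt_eq]
    simp [Matrix.trace_fin_two]

/-- `A_m` as an element of the Onsager algebra. -/
def Am (m : ℤ) : OA :=
  ⟨AmL m, by
    have h2 : inv (2 * T m : R) = 2 * T (-m) := by simp [map_ofNat]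
    have hm := elt_mem (2 * T m) 0 (by simp)
    rw [h2] at hm
    exact hm⟩

/-- `G_m` as an element of the Onsager algebra. -/
def Gm (m : ℤ) : OA :=
  ⟨GmL m, by
    have hm := elt_mem 0 (T m - T (-m)) (by simp [neg_sub])
    rw [map_zero] at hm
    exact hm⟩

/-! ### Auxiliary machinery -/

open Polynomial in
instance : IsDomain R := NoZeroDivisors.to_isDomain _

/-- Evaluation of Laurent polynomials at a unit of `ℂ`. -/
def evalH (u : ℂˣ) : R →ₐ[ℂ] ℂ :=
  AddMonoidAlgebra.lift ℂ ℂ ℤ ((Units.coeHom ℂ).comp (zpowersHom ℂˣ u))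

lemma evalH_T (u : ℂˣ) (n : ℤ) : evalH u (T n) = ((u^n : ℂˣ) : ℂ) := by
  rw [evalH, T, AddMonoidAlgebra.lift_single]; simp

lemma evalH_invert (u : ℂˣ) (p : R) : evalH u (invert p) = evalH (u⁻¹) p := by
  have h : (evalH u).comp (invert (R := ℂ)).toAlgHom = evalH u⁻¹ := by
    apply AddMonoidAlgebra.algHom_ext
    intro n
    show evalH u (invert (T n)) = evalH u⁻¹ (T n)
    rw [invert_T, evalH_T, evalH_T]; simp
    exact Subsingleton.elim _ _
  exact congrArg (fun φ => φ p) h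

/-- the Laurent version of `X - C c` -/
def Dl (c : ℂ) : R := (Polynomial.X - Polynomial.C c).toLaurent

lemma Dl_ne_zero (c : ℂ) : Dl c ≠ 0 := by
  rw [Dl, Ne, Polynomial.toLaurent_eq_zero]
  exact Polynomial.X_sub_C_ne_zero c

lemma evalH_toLaurent (u : ℂˣ) (g : Polynomial ℂ) :
    evalH u (g.toLaurent) = g.eval (u:ℂ) := by
  have h : (evalH u).comp Polynomial.toLaurentAlg = Polynomial.aeval (u:ℂ) := by
    apply Polynomial.algHom_ext
    simp only [AlgHom.coe_comp, Function.comp_apply, Polynomial.toLaurentAlg_apply,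
      Polynomial.toLaurent_X, Polynomial.aeval_X]
    rw [evalH_T]; simp
  have := congrArg (fun φ => φ g) h
  simpa [Polynomial.toLaurentAlg_apply, Polynomial.coe_aeval_eq_eval] using this

lemma evalH_Dl (u : ℂˣ) (c : ℂ) : evalH u (Dl c) = (u : ℂ) - c := by
  rw [Dl, evalH_toLaurent]; simp

lemma eval_zero_of_dvd {u : ℂˣ} {z : R} (h : Dl ↑u ∣ z) : evalH u z = 0 := by
  obtain ⟨w, rfl⟩ := h
  rw [map_mul, evalH_Dl]; simp

lemma pow_le_of_dvd' {u : ℂˣ} {m k : ℕ} {w : R} (h : (Dl ↑u) ^ m ∣ (Dl ↑u) ^ k * w)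
    (hw : evalH u w ≠ 0) : m ≤ k := by
  by_contra hmk
  push_neg at hmk
  have h1 : (Dl ↑u) ^ (k + 1) ∣ (Dl ↑u) ^ k * w := dvd_trans (pow_dvd_pow _ hmk) h
  rw [pow_succ] at h1
  exact hw (eval_zero_of_dvd ((mul_dvd_mul_iff_left (pow_ne_zero k (Dl_ne_zero _))).mp h1))

lemma T_mul_T_cancel : (T (-1) * T 1 : R) = 1 := by rw [← T_add]; simp

lemma Dl_one_eq : Dl 1 = T 1 - 1 := by
  rw [Dl, map_sub, Polynomial.toLaurent_X, Polynomial.toLaurent_C, map_one]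

lemma Dl_negone_eq : Dl (-1) = T 1 + 1 := by
  rw [Dl, map_sub, Polynomial.toLaurent_X, Polynomial.toLaurent_C, map_neg, map_one,
    sub_neg_eq_add]

lemma invert_Dl_one : invert (Dl 1) = -(T (-1)) * Dl 1 := by
  rw [Dl_one_eq, map_sub, invert_T, map_one]
  linear_combination (1:R) * T_mul_T_cancel

lemma invert_Dl_negone : invert (Dl (-1)) = T (-1) * Dl (-1) := by
  rw [Dl_negone_eq, map_add, invert_T, map_one]
  linear_combination (-1:R) * T_mul_T_cancel

lemma T_pow_neg_one (j : ℕ) : (T (-1) : R) ^ j = T (-(j:ℤ)) := by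
  rw [T_pow]; ring_nf

lemma invert_Dl_one_pow (j : ℕ) :
    invert ((Dl 1)^j) = ((-1:R)^j * T (-(j:ℤ))) * (Dl 1)^j := by
  rw [map_pow, invert_Dl_one]
  rw [show (-(T (-1)) * Dl 1 : R) = (-1) * (T (-1) * Dl 1) by ring]
  rw [mul_pow, mul_pow, T_pow_neg_one]
  ring

lemma invert_Dl_negone_pow (j : ℕ) :
    invert ((Dl (-1))^j) = T (-(j:ℤ)) * (Dl (-1))^j := by
  rw [map_pow, invert_Dl_negone, mul_pow, T_pow_neg_one]

lemma isCoprime_of_isUnit_right {x y : R} (h : IsUnit y) : IsCoprime x y := by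
  obtain ⟨v, rfl⟩ := h
  exact ⟨0, ↑v⁻¹, by simp⟩

lemma dvd_of_unit_mul {a z : R} {c : ℂ} (hc : c ≠ 0)
    (h : a ∣ (Polynomial.C c).toLaurent * z) : a ∣ z :=
  (isCoprime_of_isUnit_right
    ((Polynomial.isUnit_C.mpr (isUnit_iff_ne_zero.mpr hc)).map
      Polynomial.toLaurent)).dvd_of_dvd_mul_left h

lemma exists_decomp (u : ℂˣ) {z : R} (hz : z ≠ 0) :
    ∃ (m : ℕ) (v : R), z = (Dl ↑u) ^ m * v ∧ evalH u v ≠ 0 := by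
  obtain ⟨n, g, hg⟩ := exists_T_pow z
  have hg0 : g ≠ 0 := by
    rintro rfl
    rw [map_zero] at hg
    rcases mul_eq_zero.mp hg.symm with h | h
    · exact hz h
    · exact (isUnit_T (R := ℂ) (n:ℤ)).ne_zero h
  refine ⟨Polynomial.rootMultiplicity ((u:ℂ)) g,
    (g /ₘ (Polynomial.X - Polynomial.C ((u:ℂ))) ^ Polynomial.rootMultiplicity ((u:ℂ)) g).toLaurent
      * T (-(n:ℤ)), ?_, ?_⟩
  · have h2 : z = g.toLaurent * T (-(n:ℤ)) := by
      rw [hg, mul_assoc, ← T_add]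
      simp
    rw [h2]
    conv_lhs => rw [← Polynomial.pow_mul_divByMonic_rootMultiplicity_eq g ((u:ℂ))]
    rw [map_mul, map_pow, Dl, mul_assoc]
  · rw [map_mul, evalH_toLaurent, evalH_T]
    exact mul_ne_zero
      (Polynomial.eval_divByMonic_pow_rootMultiplicity_ne_zero ((u:ℂ)) hg0) (Units.ne_zero _)

lemma dvd_of_eval_zero {u : ℂˣ} {z : R} (h : evalH u z = 0) : Dl ↑u ∣ z := by
  rcases eq_or_ne z 0 with rfl | hz
  · exact dvd_zero _
  obtain ⟨m, v, rfl, hv⟩ := exists_decomp u hz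
  rcases Nat.eq_zero_or_pos m with rfl | hm
  · rw [pow_zero, one_mul] at h; exact absurd h hv
  · exact dvd_mul_of_dvd_left (dvd_pow_self _ hm.ne') _

/-- Core multiplicity bound: if `(t-u)^M` divides both `p·(t-u)·r` (with `r(u) ≠ 0`)
and `p - p̄`, then `(t-u)^{2⌊M/2⌋}` divides `p`. -/
lemma mult_bound (u : ℂˣ) (hu : u⁻¹ = u)
    (hinv : invert (Dl ↑u) = (Polynomial.C (-(u:ℂ))).toLaurent * (T (-1) * Dl ↑u))
    (M : ℕ) (p r : R) (hr : evalH u r ≠ 0)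
    (hA : (Dl ↑u) ^ M ∣ (p * Dl ↑u) * r)
    (hB : (Dl ↑u) ^ M ∣ p - invert p) :
    (Dl ↑u) ^ (2 * (M / 2)) ∣ p := by
  rcases eq_or_ne p 0 with rfl | hp
  · exact dvd_zero _
  obtain ⟨a, v, rfl, hv⟩ := exists_decomp u hp
  have step1 : M ≤ a + 1 := by
    apply pow_le_of_dvd' (w := v * r) (u := u)
    · have : (Dl ↑u) ^ a * v * Dl ↑u * r = (Dl ↑u) ^ (a+1) * (v * r) := by ring
      rwa [this] at hA
    · rw [map_mul]; exact mul_ne_zero hv hr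
  have step2 : Odd a → M ≤ a := by
    intro ha
    have hip : invert ((Dl ↑u) ^ a * v)
        = (Polynomial.C (-(u:ℂ))).toLaurent ^ a * T (-(a:ℤ)) * (Dl ↑u) ^ a * invert v := by
      rw [map_mul, map_pow, hinv]
      rw [mul_pow, mul_pow, T_pow_neg_one]
      ring
    have hw : (Dl ↑u) ^ a * v - invert ((Dl ↑u) ^ a * v)
        = (Dl ↑u) ^ a * (v - (Polynomial.C (-(u:ℂ))).toLaurent ^ a * T (-(a:ℤ)) * invert v) := by
      rw [hip]; ring
    apply pow_le_of_dvd' (u := u) (k := a)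
      (w := v - (Polynomial.C (-(u:ℂ))).toLaurent ^ a * T (-(a:ℤ)) * invert v)
    · rw [← hw]; exact hB
    · have e1 : evalH u ((Polynomial.C (-(u:ℂ))).toLaurent ^ a * T (-(a:ℤ)) * invert v)
          = (-(u:ℂ))^a * ((u:ℂˣ)^(-(a:ℤ)) : ℂ) * evalH u v := by
        rw [map_mul, map_mul, map_pow, evalH_toLaurent, evalH_T, evalH_invert, hu]
        simp
      have e2 : (-(u:ℂ))^a * ((u:ℂˣ)^(-(a:ℤ)) : ℂ) = -1 := by
        rw [ha.neg_pow, zpow_neg, zpow_natCast]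
        have h4 : ((u:ℂ))^a ≠ 0 := pow_ne_zero _ (Units.ne_zero u)
        field_simp
      rw [map_sub, e1, e2]
      have : evalH u v - -1 * evalH u v = 2 * evalH u v := by ring
      rw [this]
      exact mul_ne_zero two_ne_zero hv
  have hfin : 2 * (M / 2) ≤ a := by
    rcases Nat.even_or_odd a with ⟨c, hc⟩ | ho
    · omega
    · have := step2 ho
      omega
  exact dvd_mul_of_dvd_left (pow_dvd_pow _ hfin) v

/-! ### matrix side -/

lemma comm_entry (A B : Loop) (i j : Fin 2) :
    (A * B - B * A) i j
      = (A i 0 * B 0 j + A i 1 * B 1 j) - (B i 0 * A 0 j + B i 1 * A 1 j) := by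
  simp [Matrix.sub_apply, Matrix.mul_apply, Fin.sum_univ_two]

lemma lie_coe (x y : OA) :
    ((⁅x, y⁆ : OA) : Loop) = (x:Loop) * (y:Loop) - (y:Loop) * (x:Loop) := by
  have h : ((⁅x, y⁆ : OA) : Loop) = ⁅(x:Loop), (y:Loop)⁆ := rfl
  rw [h, Ring.lie_def]

lemma thetaHat_eq (A : Loop) :
    thetaHat A = !![inv (A 1 1), inv (A 1 0); inv (A 0 1), inv (A 0 0)] := by
  have hmap : A.map ⇑inv = !![inv (A 0 0), inv (A 0 1); inv (A 1 0), inv (A 1 1)] := by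
    ext i j
    fin_cases i <;> fin_cases j <;> simp [Matrix.map_apply]
  rw [thetaHat, hmap, Sw]
  ext i j
  fin_cases i <;> fin_cases j <;>
    simp [Matrix.mul_apply, Fin.sum_univ_two]

lemma coords (x : OA) :
    (x : Loop) 1 0 = inv ((x : Loop) 0 1) ∧ (x : Loop) 1 1 = -((x : Loop) 0 0) ∧
      inv ((x : Loop) 0 0) = -((x : Loop) 0 0) := by
  obtain ⟨hθ, htr⟩ := x.2
  rw [Matrix.trace_fin_two] at htr
  have h11 : (x : Loop) 1 1 = -((x : Loop) 0 0) := by linear_combination htr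
  rw [thetaHat_eq] at hθ
  have hent : ∀ i j : Fin 2,
      (!![inv ((x:Loop) 1 1), inv ((x:Loop) 1 0);
          inv ((x:Loop) 0 1), inv ((x:Loop) 0 0)] : Loop) i j = (x : Loop) i j := by
    intro i j; rw [hθ]
  have h10 := hent 1 0
  have h00 := hent 0 0
  simp only [Matrix.of_apply, Matrix.cons_val', Matrix.cons_val_zero, Matrix.cons_val_one, Matrix.head_cons,
    Matrix.empty_val', Matrix.cons_val_fin_one, Matrix.head_fin_const] at h10 h00
  refine ⟨h10.symm, h11, ?_⟩
  have h00' : inv (-((x:Loop) 0 0)) = (x:Loop) 0 0 := by rw [← h11]; exact h00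
  rw [map_neg] at h00'
  linear_combination -h00'

lemma mem_IP {P : Polynomial ℂ} {x : OA} :
    x ∈ IP P ↔ ∀ i j, P.toLaurent ∣ (x : Loop) i j := Iff.rfl

lemma Am0_coe : ((Am 0 : OA) : Loop) = !![0, 2; 2, 0] := by
  show AmL 0 = _
  rw [AmL, elt_eq]
  ext i j
  fin_cases i <;> fin_cases j <;> simp [T_zero]

lemma Gm1_coe : ((Gm 1 : OA) : Loop) = !![T 1 - T (-1), 0; 0, -(T 1 - T (-1))] := by
  show GmL 1 = _
  rw [GmL, elt_eq]

lemma Gm1_entries :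
    ((Gm 1 : OA) : Loop) 0 0 = T 1 - T (-1) ∧ ((Gm 1 : OA) : Loop) 0 1 = 0 ∧
    ((Gm 1 : OA) : Loop) 1 0 = 0 ∧ ((Gm 1 : OA) : Loop) 1 1 = -(T 1 - T (-1)) := by
  rw [Gm1_coe]
  refine ⟨?_, ?_, ?_, ?_⟩ <;> simp

lemma Am0_entries :
    ((Am 0 : OA) : Loop) 0 0 = 0 ∧ ((Am 0 : OA) : Loop) 0 1 = 2 ∧
    ((Am 0 : OA) : Loop) 1 0 = 2 ∧ ((Am 0 : OA) : Loop) 1 1 = 0 := by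
  rw [Am0_coe]
  refine ⟨?_, ?_, ?_, ?_⟩ <;> simp

lemma dvd_one_of_eval {z : R} (h : evalH 1 z = 0) : Dl 1 ∣ z := by
  have h2 := dvd_of_eval_zero (u := 1) h
  rwa [Units.val_one] at h2

lemma dvd_negone_of_eval {z : R} (h : evalH (-1) z = 0) : Dl (-1) ∣ z := by
  have h2 := dvd_of_eval_zero (u := -1) h
  rwa [Units.val_neg, Units.val_one] at h2

lemma pow_le_one_var {m k : ℕ} {w : R} (h : (Dl 1) ^ m ∣ (Dl 1) ^ k * w)
    (hw : evalH 1 w ≠ 0) : m ≤ k := by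
  refine pow_le_of_dvd' (u := 1) ?_ hw
  rwa [Units.val_one]

lemma pow_le_negone_var {m k : ℕ} {w : R} (h : (Dl (-1)) ^ m ∣ (Dl (-1)) ^ k * w)
    (hw : evalH (-1) w ≠ 0) : m ≤ k := by
  refine pow_le_of_dvd' (u := -1) ?_ hw
  rwa [Units.val_neg, Units.val_one]

lemma neg_one_inv_units : ((-1 : ℂˣ))⁻¹ = -1 :=
  inv_eq_of_mul_eq_one_right (by simp)

lemma mult_bound_one (M : ℕ) (p r : R) (hr : evalH 1 r ≠ 0)
    (hA : (Dl 1) ^ M ∣ (p * Dl 1) * r) (hB : (Dl 1) ^ M ∣ p - invert p) :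
    (Dl 1) ^ (2 * (M / 2)) ∣ p := by
  have hinv1 : invert (Dl ((1:ℂˣ):ℂ))
      = (Polynomial.C (-((1:ℂˣ):ℂ))).toLaurent * (T (-1) * Dl ((1:ℂˣ):ℂ)) := by
    rw [Units.val_one, invert_Dl_one]
    have h5 : (Polynomial.C (-(1:ℂ))).toLaurent = -1 := by simp
    rw [h5]; ring
  have hres := mult_bound 1 inv_one hinv1 M p r hr
    (by rwa [Units.val_one]) (by rwa [Units.val_one])
  rwa [Units.val_one] at hres

lemma mult_bound_negone (M : ℕ) (p r : R) (hr : evalH (-1) r ≠ 0)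
    (hA : (Dl (-1)) ^ M ∣ (p * Dl (-1)) * r) (hB : (Dl (-1)) ^ M ∣ p - invert p) :
    (Dl (-1)) ^ (2 * (M / 2)) ∣ p := by
  have hcast : ((-1:ℂˣ):ℂ) = -1 := by rw [Units.val_neg, Units.val_one]
  have hinv1 : invert (Dl ((-1:ℂˣ):ℂ))
      = (Polynomial.C (-((-1:ℂˣ):ℂ))).toLaurent * (T (-1) * Dl ((-1:ℂˣ):ℂ)) := by
    rw [hcast, invert_Dl_negone]
    have h5 : (Polynomial.C (-(-1:ℂ))).toLaurent = 1 := by simp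
    rw [h5]; ring
  have hres := mult_bound (-1) neg_one_inv_units hinv1 M p r hr
    (by rwa [hcast]) (by rwa [hcast])
  rwa [hcast] at hres


/-- **Lemma 2 of Date–Roan.**  Let `P(t) = (t-1)^L (t+1)^K P*(t)` be a reciprocal
polynomial with `P*(±1) ≠ 0`, and let `P̃(t) = (t-1)^{2⌊L/2⌋}(t+1)^{2⌊K/2⌋}P*(t)`.
Then `Z(I_P)` consists of the elements `p(t)e + p(t⁻¹)f + q(t)h` of the Onsager
algebra with `P̃ | p` and `P | q`; consequently `I_P` is a closed ideal if and only if
the zero multiplicities `L`, `K` of `P` at `t = ±1` are both even. -/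
theorem center_of_quotient_by_IP (L K : ℕ) (Pstar P Pt : Polynomial ℂ)
    (h1 : Pstar.eval 1 ≠ 0) (h2 : Pstar.eval (-1) ≠ 0)
    (hPdef : P = (Polynomial.X - 1) ^ L * (Polynomial.X + 1) ^ K * Pstar)
    (hPtdef : Pt = (Polynomial.X - 1) ^ (2 * (L / 2)) *
      (Polynomial.X + 1) ^ (2 * (K / 2)) * Pstar)
    (hP : IsReciprocal P) :
    (∀ x : OA, (∀ y : OA, ⁅x, y⁆ ∈ IP P) ↔
        (Pt.toLaurent ∣ (x : Loop) 0 1 ∧ P.toLaurent ∣ (x : Loop) 0 0)) ∧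
    ((∀ x : OA, (∀ y : OA, ⁅x, y⁆ ∈ IP P) → x ∈ IP P) ↔ (Even L ∧ Even K)) := by
  classical
  -- ### polynomial-side setup
  have hS0 : Pstar ≠ 0 := fun h => h1 (by simp [h])
  have hXm : (Polynomial.X - 1 : Polynomial ℂ) = Polynomial.X - Polynomial.C 1 := by
    rw [Polynomial.C_1]
  have hXp : (Polynomial.X + 1 : Polynomial ℂ) = Polynomial.X - Polynomial.C (-1) := by
    rw [Polynomial.C_neg, Polynomial.C_1, sub_neg_eq_add]
  have htl1 : (Polynomial.X - 1 : Polynomial ℂ).toLaurent = Dl 1 := by rw [hXm]; rfl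
  have htl2 : (Polynomial.X + 1 : Polynomial ℂ).toLaurent = Dl (-1) := by rw [hXp]; rfl
  have hPL : P.toLaurent = (Dl 1)^L * ((Dl (-1))^K * Pstar.toLaurent) := by
    rw [hPdef, map_mul, map_mul, map_pow, map_pow, htl1, htl2, mul_assoc]
  have hPtL : Pt.toLaurent
      = (Dl 1)^(2*(L/2)) * ((Dl (-1))^(2*(K/2)) * Pstar.toLaurent) := by
    rw [hPtdef, map_mul, map_mul, map_pow, map_pow, htl1, htl2, mul_assoc]
  have hXmne : (Polynomial.X - 1 : Polynomial ℂ) ≠ 0 := by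
    rw [hXm]; exact Polynomial.X_sub_C_ne_zero 1
  have hXpne : (Polynomial.X + 1 : Polynomial ℂ) ≠ 0 := by
    rw [hXp]; exact Polynomial.X_sub_C_ne_zero (-1)
  have hdP : P.natDegree = L + K + Pstar.natDegree := by
    rw [hPdef, Polynomial.natDegree_mul (mul_ne_zero (pow_ne_zero _ hXmne)
      (pow_ne_zero _ hXpne)) hS0, Polynomial.natDegree_mul (pow_ne_zero _ hXmne)
      (pow_ne_zero _ hXpne), Polynomial.natDegree_pow, Polynomial.natDegree_pow,
      hXm, hXp, Polynomial.natDegree_X_sub_C, Polynomial.natDegree_X_sub_C]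
    ring
  -- coprimality facts in ℂ[X], transferred to R
  have hc12 : IsCoprime (Dl 1) (Dl (-1)) := by
    have h := Polynomial.isCoprime_X_sub_C_of_isUnit_sub
      (show IsUnit ((1:ℂ) - (-1)) by norm_num)
    exact h.map Polynomial.toLaurent
  have hc1S : IsCoprime (Dl 1) Pstar.toLaurent := by
    have hdvd : ¬ (Polynomial.X - Polynomial.C (1:ℂ)) ∣ Pstar := by
      rw [Polynomial.dvd_iff_isRoot]
      exact h1
    have h := (dvd_or_isCoprime _ _ (Polynomial.irreducible_X_sub_C (1:ℂ))).resolve_left hdvd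
    exact h.map Polynomial.toLaurent
  have hcmS : IsCoprime (Dl (-1)) Pstar.toLaurent := by
    have hdvd : ¬ (Polynomial.X - Polynomial.C (-1:ℂ)) ∣ Pstar := by
      rw [Polynomial.dvd_iff_isRoot]
      exact h2
    have h := (dvd_or_isCoprime _ _ (Polynomial.irreducible_X_sub_C (-1:ℂ))).resolve_left hdvd
    exact h.map Polynomial.toLaurent
  have hone : ((1:ℂˣ) : ℂ) = 1 := Units.val_one
  have hmone : ((-1:ℂˣ) : ℂ) = -1 := by rw [Units.val_neg, Units.val_one]
  have hev1S : evalH 1 Pstar.toLaurent = Pstar.eval 1 := by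
    rw [evalH_toLaurent, hone]
  have hevmS : evalH (-1) Pstar.toLaurent = Pstar.eval (-1) := by
    rw [evalH_toLaurent, hmone]
  -- the reciprocal structure of P
  obtain ⟨e, he1, hePL⟩ : ∃ e : ℂ, (e = 1 ∨ e = -1) ∧
      P.toLaurent = (Polynomial.C e).toLaurent * (T (P.natDegree:ℤ) * invert P.toLaurent) := by
    rcases hP.2.2 with h | h
    · exact ⟨1, Or.inl rfl, by rw [map_one, map_one, one_mul]; exact h⟩
    · refine ⟨-1, Or.inr rfl, ?_⟩
      rw [map_neg, map_one, map_neg, map_one]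
      linear_combination h
  -- reciprocality of Pstar
  have hSrec : Pstar.toLaurent
      = ((Polynomial.C e).toLaurent * (-1:R)^L)
        * (T (Pstar.natDegree:ℤ) * invert Pstar.toLaurent) := by
    have hinvPL : invert P.toLaurent
        = ((-1:R)^L * T (-(L:ℤ))) * (Dl 1)^L
          * (T (-(K:ℤ)) * (Dl (-1))^K * invert Pstar.toLaurent) := by
      rw [hPL, map_mul, map_mul, invert_Dl_one_pow, invert_Dl_negone_pow]
    have hTsplit : (T (P.natDegree:ℤ) : R)
        = T (L:ℤ) * T (K:ℤ) * T (Pstar.natDegree:ℤ) := by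
      rw [← T_add, ← T_add, hdP]
      push_cast
      ring_nf
    have hcanc := hePL
    rw [hinvPL, hTsplit, hPL] at hcanc
    have hne : (Dl 1)^L * (Dl (-1))^K ≠ 0 :=
      mul_ne_zero (pow_ne_zero _ (Dl_ne_zero _)) (pow_ne_zero _ (Dl_ne_zero _))
    apply mul_left_cancel₀ hne
    have hTL : (T (L:ℤ) * T (-(L:ℤ)) : R) = 1 := by rw [← T_add]; simp
    have hTK : (T (K:ℤ) * T (-(K:ℤ)) : R) = 1 := by rw [← T_add]; simp
    calc (Dl 1)^L * (Dl (-1))^K * Pstar.toLaurent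
        = (Dl 1)^L * ((Dl (-1))^K * Pstar.toLaurent) := by ring
      _ = (Polynomial.C e).toLaurent
            * (T (L:ℤ) * T (K:ℤ) * T (Pstar.natDegree:ℤ)
              * (((-1:R)^L * T (-(L:ℤ))) * (Dl 1)^L
                * (T (-(K:ℤ)) * (Dl (-1))^K * invert Pstar.toLaurent))) := hcanc
      _ = ((Polynomial.C e).toLaurent * (-1:R)^L
            * (T (Pstar.natDegree:ℤ) * invert Pstar.toLaurent))
            * ((T (L:ℤ) * T (-(L:ℤ))) * (T (K:ℤ) * T (-(K:ℤ))))
            * ((Dl 1)^L * (Dl (-1))^K) := by ring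
      _ = (Dl 1)^L * (Dl (-1))^K
            * ((Polynomial.C e).toLaurent * (-1:R)^L
              * (T (Pstar.natDegree:ℤ) * invert Pstar.toLaurent)) := by
          rw [hTL, hTK]; ring
  -- the sign is 1
  have hsc : ((Polynomial.C e).toLaurent * (-1:R)^L : R) = 1 := by
    have hval := congrArg (evalH 1) hSrec
    simp only [map_mul, map_pow, map_neg, map_one, evalH_T, evalH_invert, inv_one,
      evalH_toLaurent, Units.val_one, one_zpow, Polynomial.eval_C] at hval
    have h9 : (e * (-1:ℂ)^L - 1) * Pstar.eval 1 = 0 := by linear_combination -hval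
    have he' : e * (-1:ℂ)^L = 1 := by
      rcases mul_eq_zero.mp h9 with h | h
      · linear_combination h
      · exact absurd h h1
    have h10 : (Polynomial.C e * (-1:Polynomial ℂ)^L) = 1 := by
      have h11 := congrArg Polynomial.C he'
      rwa [Polynomial.C_mul, map_pow, map_neg, Polynomial.C_1] at h11
    calc (Polynomial.C e).toLaurent * (-1:R)^L
        = (Polynomial.C e * (-1:Polynomial ℂ)^L).toLaurent := by
          rw [map_mul, map_pow, map_neg, map_one]
      _ = 1 := by rw [h10, map_one]
  have hSrec1 : Pstar.toLaurent = T (Pstar.natDegree:ℤ) * invert Pstar.toLaurent := by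
    have h12 := hSrec
    rw [hsc, one_mul] at h12
    exact h12
  have hSrecInv : invert Pstar.toLaurent = T (-(Pstar.natDegree:ℤ)) * Pstar.toLaurent := by
    conv_rhs => rw [hSrec1]
    rw [← mul_assoc, ← T_add]
    simp
  -- parity of deg Pstar
  have hm1inv : ((-1 : ℂˣ))⁻¹ = -1 := neg_one_inv_units
  have hparSu : ((-1:ℂˣ))^((Pstar.natDegree:ℤ)) = 1 := by
    have hval := congrArg (evalH (-1)) hSrec1
    rw [map_mul, evalH_T, evalH_invert, hm1inv, hevmS] at hval
    have h9 : (Units.val ((-1:ℂˣ)^((Pstar.natDegree:ℤ))) - 1) * Pstar.eval (-1) = 0 := by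
      linear_combination -hval
    rcases mul_eq_zero.mp h9 with h | h
    · refine Units.ext ?_
      rw [Units.val_one]
      linear_combination h
    · exact absurd h h2
  have hu_even : ∀ n : ℕ, Even n → ((-1:ℂˣ))^(-(n:ℤ)) = 1 := by
    rintro n ⟨c, rfl⟩
    rw [show (-((c+c:ℕ):ℤ)) = 2*(-(c:ℤ)) by push_cast; ring, zpow_mul,
      show ((-1:ℂˣ))^(2:ℤ) = 1 by rw [zpow_two]; simp, one_zpow]
  have hnegdS : ((-1:ℂˣ))^(-(Pstar.natDegree:ℤ)) = 1 := by
    rw [zpow_neg, hparSu, inv_one]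
  -- invert of Pt
  have hnegL' : ((-1:R))^(2*(L/2)) = 1 := Even.neg_one_pow ⟨L/2, by ring⟩
  have hinvPt : invert Pt.toLaurent
      = (T (-((2*(L/2):ℕ):ℤ)) * T (-((2*(K/2):ℕ):ℤ)) * T (-(Pstar.natDegree:ℤ)))
        * Pt.toLaurent := by
    rw [hPtL, map_mul, map_mul, invert_Dl_one_pow, invert_Dl_negone_pow, hSrecInv, hnegL']
    ring
  have h_invmul : ∀ s : R, invert (Pt.toLaurent * s)
      = Pt.toLaurent * ((T (-((2*(L/2):ℕ):ℤ)) * T (-((2*(K/2):ℕ):ℤ))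
          * T (-(Pstar.natDegree:ℤ))) * invert s) := by
    intro s
    rw [map_mul, hinvPt]
    ring
  -- factorizations of T 1 - T (-1)
  have hfac : (T 1 - T (-1) : R) = Dl 1 * (T (-1) * Dl (-1)) := by
    rw [Dl_one_eq, Dl_negone_eq]
    linear_combination (-(T 1) : R) * T_mul_T_cancel
  have hfac2 : (T 1 - T (-1) : R) = Dl (-1) * (T (-1) * Dl 1) := by
    rw [Dl_one_eq, Dl_negone_eq]
    linear_combination (-(T 1) : R) * T_mul_T_cancel
  -- the combination lemma
  have hzw : ∀ z w : R, Pt.toLaurent ∣ z → Dl 1 ∣ w → Dl (-1) ∣ w →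
      P.toLaurent ∣ z * w := by
    intro z w hz hw1 hw2
    obtain ⟨z1, rfl⟩ := hz
    have hg1 : (Dl 1)^(L - 2*(L/2)) ∣ w := by
      have h : L - 2*(L/2) = 0 ∨ L - 2*(L/2) = 1 := by omega
      rcases h with h | h
      · rw [h, pow_zero]; exact one_dvd _
      · rw [h, pow_one]; exact hw1
    have hg2 : (Dl (-1))^(K - 2*(K/2)) ∣ w := by
      have h : K - 2*(K/2) = 0 ∨ K - 2*(K/2) = 1 := by omega
      rcases h with h | h
      · rw [h, pow_zero]; exact one_dvd _
      · rw [h, pow_one]; exact hw2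
    have hg12 : (Dl 1)^(L - 2*(L/2)) * (Dl (-1))^(K - 2*(K/2)) ∣ w :=
      (hc12.pow).mul_dvd hg1 hg2
    have hLsplit : (Dl 1)^L = (Dl 1)^(2*(L/2)) * (Dl 1)^(L - 2*(L/2)) := by
      rw [← pow_add]
      congr 1
      omega
    have hKsplit : (Dl (-1))^K = (Dl (-1))^(2*(K/2)) * (Dl (-1))^(K - 2*(K/2)) := by
      rw [← pow_add]
      congr 1
      omega
    have hPfact : P.toLaurent
        = Pt.toLaurent * ((Dl 1)^(L - 2*(L/2)) * (Dl (-1))^(K - 2*(K/2))) := by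
      rw [hPL, hPtL, hLsplit, hKsplit]
      ring
    rw [hPfact, mul_assoc]
    exact mul_dvd_mul_left Pt.toLaurent (hg12.mul_left z1)
  -- forward key: from the two divisibility conditions to Pt ∣ p
  have hkey_mp : ∀ p : R, P.toLaurent ∣ p * (T 1 - T (-1)) →
      P.toLaurent ∣ p - invert p → Pt.toLaurent ∣ p := by
    intro p hA hB
    have hAL : (Dl 1)^L ∣ P.toLaurent := by rw [hPL]; exact dvd_mul_right _ _
    have hBL : (Dl (-1))^K ∣ P.toLaurent := by
      rw [hPL]; exact ⟨(Dl 1)^L * Pstar.toLaurent, by ring⟩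
    have hd1p : (Dl 1)^(2*(L/2)) ∣ p := by
      apply mult_bound_one L p (T (-1) * Dl (-1))
      · rw [map_mul, evalH_T, evalH_Dl, hone, one_zpow, Units.val_one]
        norm_num
      · have h6 := dvd_trans hAL hA
        rw [hfac] at h6
        rwa [show p * (Dl 1 * (T (-1) * Dl (-1))) = (p * Dl 1) * (T (-1) * Dl (-1)) by ring]
          at h6
      · exact dvd_trans hAL hB
    have hdmp : (Dl (-1))^(2*(K/2)) ∣ p := by
      apply mult_bound_negone K p (T (-1) * Dl 1)
      · rw [map_mul, evalH_T, evalH_Dl, hmone]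
        rw [show ((-1:ℂˣ))^(-1:ℤ) = -1 by rw [zpow_neg, zpow_one, hm1inv], hmone]
        norm_num
      · have h6 := dvd_trans hBL hA
        rw [hfac2] at h6
        rwa [show p * (Dl (-1) * (T (-1) * Dl 1)) = (p * Dl (-1)) * (T (-1) * Dl 1) by ring]
          at h6
      · exact dvd_trans hBL hB
    have hdSp : Pstar.toLaurent ∣ p := by
      have hSL : Pstar.toLaurent ∣ P.toLaurent := by
        rw [hPL]; exact ⟨(Dl 1)^L * (Dl (-1))^K, by ring⟩
      have h6 := dvd_trans hSL hA
      rw [hfac] at h6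
      have hcop : IsCoprime Pstar.toLaurent (Dl 1 * (T (-1) * Dl (-1))) :=
        (hc1S.symm).mul_right ((isCoprime_of_isUnit_right (isUnit_T _)).mul_right hcmS.symm)
      exact hcop.dvd_of_dvd_mul_right h6
    rw [hPtL]
    exact ((hc12.pow).mul_right (hc1S.pow_left)).mul_dvd hd1p
      ((hcmS.pow_left).mul_dvd hdmp hdSp)
  -- Part 1
  have part1 : ∀ x : OA, (∀ y : OA, ⁅x, y⁆ ∈ IP P) ↔
      (Pt.toLaurent ∣ (x : Loop) 0 1 ∧ P.toLaurent ∣ (x : Loop) 0 0) := by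
    intro x
    obtain ⟨hx10, hx11, hx00i⟩ := coords x
    have hx10' : (x:Loop) 1 0 = invert ((x:Loop) 0 1) := hx10
    have hC2 : (Polynomial.C (2:ℂ)).toLaurent = (2:R) := by
      rw [Polynomial.toLaurent_C]; exact map_ofNat _ 2
    have hC4 : (Polynomial.C (4:ℂ)).toLaurent = (4:R) := by
      rw [Polynomial.toLaurent_C]; exact map_ofNat _ 4
    obtain ⟨hA00, hA01, hA10, hA11⟩ := Am0_entries
    obtain ⟨hG00, hG01, hG10, hG11⟩ := Gm1_entries
    constructor
    · intro hx
      have hAm := mem_IP.mp (hx (Am 0))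
      have hGm := mem_IP.mp (hx (Gm 1))
      -- P ∣ q
      have hq : P.toLaurent ∣ (x:Loop) 0 0 := by
        have h01 := hAm 0 1
        rw [lie_coe, comm_entry, hA01, hA11, hA00, hx11] at h01
        rw [show (x:Loop) 0 0 * 2 + (x:Loop) 0 1 * 0 - (0 * (x:Loop) 0 1 + 2 * -((x:Loop) 0 0))
            = (Polynomial.C (4:ℂ)).toLaurent * ((x:Loop) 0 0) by rw [hC4]; ring] at h01
        exact dvd_of_unit_mul (by norm_num) h01
      -- P ∣ p (T 1 - T (-1))
      have hA : P.toLaurent ∣ (x:Loop) 0 1 * (T 1 - T (-1)) := by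
        have h01 := hGm 0 1
        rw [lie_coe, comm_entry, hG01, hG11, hG00, hx11] at h01
        rw [show (x:Loop) 0 0 * 0 + (x:Loop) 0 1 * -(T 1 - T (-1))
              - ((T 1 - T (-1)) * (x:Loop) 0 1 + 0 * -((x:Loop) 0 0))
            = (Polynomial.C (2:ℂ)).toLaurent * (-((x:Loop) 0 1 * (T 1 - T (-1))))
            by rw [hC2]; ring] at h01
        exact (dvd_neg.mp (dvd_of_unit_mul (by norm_num) h01))
      -- P ∣ p - invert p
      have hB : P.toLaurent ∣ (x:Loop) 0 1 - invert ((x:Loop) 0 1) := by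
        have h00 := hAm 0 0
        rw [lie_coe, comm_entry, hA00, hA01, hA10, hx10'] at h00
        rw [show (x:Loop) 0 0 * 0 + (x:Loop) 0 1 * 2
              - (0 * (x:Loop) 0 0 + 2 * invert ((x:Loop) 0 1))
            = (Polynomial.C (2:ℂ)).toLaurent * ((x:Loop) 0 1 - invert ((x:Loop) 0 1))
            by rw [hC2]; ring] at h00
        exact dvd_of_unit_mul (by norm_num) h00
      exact ⟨hkey_mp _ hA hB, hq⟩
    · rintro ⟨hp, hq⟩ y
      obtain ⟨hy10, hy11, hy00i⟩ := coords y
      have hy10' : (y:Loop) 1 0 = invert ((y:Loop) 0 1) := hy10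
      have hy00i' : invert ((y:Loop) 0 0) = -((y:Loop) 0 0) := hy00i
      obtain ⟨s, hs⟩ := hp
      have hbar : invert ((x:Loop) 0 1)
          = Pt.toLaurent * ((T (-((2*(L/2):ℕ):ℤ)) * T (-((2*(K/2):ℕ):ℤ))
              * T (-(Pstar.natDegree:ℤ))) * invert s) := by
        rw [hs, h_invmul]
      have hpbar : Pt.toLaurent ∣ invert ((x:Loop) 0 1) := ⟨_, hbar⟩
      -- Dl 1 and Dl (-1) divide q' = y 0 0
      have hq'1 : Dl 1 ∣ (y:Loop) 0 0 := by
        apply dvd_one_of_eval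
        have h0 := congrArg (evalH 1) hy00i'
        rw [evalH_invert, inv_one, map_neg] at h0
        linear_combination (1/2 : ℂ) * h0
      have hq'2 : Dl (-1) ∣ (y:Loop) 0 0 := by
        apply dvd_negone_of_eval
        have h0 := congrArg (evalH (-1)) hy00i'
        rw [evalH_invert, hm1inv, map_neg] at h0
        linear_combination (1/2 : ℂ) * h0
      -- entry 0 0 computation
      have hE00 : P.toLaurent ∣
          ((x:Loop) 0 1 * invert ((y:Loop) 0 1) - (y:Loop) 0 1 * invert ((x:Loop) 0 1)) := by
        have hrew : (x:Loop) 0 1 * invert ((y:Loop) 0 1) - (y:Loop) 0 1 * invert ((x:Loop) 0 1)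
            = Pt.toLaurent * (s * invert ((y:Loop) 0 1)
              - (T (-((2*(L/2):ℕ):ℤ)) * T (-((2*(K/2):ℕ):ℤ)) * T (-(Pstar.natDegree:ℤ)))
                * invert s * (y:Loop) 0 1) := by
          rw [hbar, hs]; ring
        rw [hrew]
        apply hzw _ _ dvd_rfl
        · apply dvd_one_of_eval
          simp only [map_sub, map_mul, evalH_T, evalH_invert, inv_one, one_zpow,
            Units.val_one]
          ring
        · apply dvd_negone_of_eval
          simp only [map_sub, map_mul, evalH_T, evalH_invert, hm1inv]
          rw [hu_even (2*(L/2)) ⟨L/2, by ring⟩, hu_even (2*(K/2)) ⟨K/2, by ring⟩, hnegdS]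
          simp only [Units.val_one]
          ring
      refine mem_IP.mpr ?_
      intro i j
      fin_cases i <;> fin_cases j
      · show P.toLaurent ∣ ((⁅x, y⁆ : OA) : Loop) 0 0
        rw [lie_coe, comm_entry, hx10', hy10']
        rw [show (x:Loop) 0 0 * (y:Loop) 0 0 + (x:Loop) 0 1 * invert ((y:Loop) 0 1)
              - ((y:Loop) 0 0 * (x:Loop) 0 0 + (y:Loop) 0 1 * invert ((x:Loop) 0 1))
            = (x:Loop) 0 1 * invert ((y:Loop) 0 1) - (y:Loop) 0 1 * invert ((x:Loop) 0 1)
            by ring]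
        exact hE00
      · show P.toLaurent ∣ ((⁅x, y⁆ : OA) : Loop) 0 1
        rw [lie_coe, comm_entry, hx11, hy11]
        rw [show (x:Loop) 0 0 * (y:Loop) 0 1 + (x:Loop) 0 1 * -((y:Loop) 0 0)
              - ((y:Loop) 0 0 * (x:Loop) 0 1 + (y:Loop) 0 1 * -((x:Loop) 0 0))
            = (2 * ((x:Loop) 0 0 * (y:Loop) 0 1))
              - (2 * ((x:Loop) 0 1 * (y:Loop) 0 0)) by ring]
        exact dvd_sub ((hq.mul_right _).mul_left 2)
          ((hzw _ _ ⟨s, hs⟩ hq'1 hq'2).mul_left 2)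
      · show P.toLaurent ∣ ((⁅x, y⁆ : OA) : Loop) 1 0
        rw [lie_coe, comm_entry, hx10', hy10', hx11, hy11]
        rw [show invert ((x:Loop) 0 1) * (y:Loop) 0 0 + -((x:Loop) 0 0) * invert ((y:Loop) 0 1)
              - (invert ((y:Loop) 0 1) * (x:Loop) 0 0 + -((y:Loop) 0 0) * invert ((x:Loop) 0 1))
            = (2 * (invert ((x:Loop) 0 1) * (y:Loop) 0 0))
              - (2 * ((x:Loop) 0 0 * invert ((y:Loop) 0 1))) by ring]
        exact dvd_sub ((hzw _ _ hpbar hq'1 hq'2).mul_left 2)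
          ((hq.mul_right _).mul_left 2)
      · show P.toLaurent ∣ ((⁅x, y⁆ : OA) : Loop) 1 1
        rw [lie_coe, comm_entry, hx10', hy10', hx11, hy11]
        rw [show invert ((x:Loop) 0 1) * (y:Loop) 0 1 + -((x:Loop) 0 0) * -((y:Loop) 0 0)
              - (invert ((y:Loop) 0 1) * (x:Loop) 0 1 + -((y:Loop) 0 0) * -((x:Loop) 0 0))
            = -((x:Loop) 0 1 * invert ((y:Loop) 0 1) - (y:Loop) 0 1 * invert ((x:Loop) 0 1))
            by ring]
        exact dvd_neg.mpr hE00
  refine ⟨part1, ?_⟩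
  constructor
  · intro hc
    have hinv0 : inv (0:R) = -(0:R) := by simp
    set x0 : OA := ⟨elt Pt.toLaurent (inv Pt.toLaurent) 0,
      elt_mem Pt.toLaurent 0 hinv0⟩ with hx0def
    have hx01 : (x0 : Loop) 0 1 = Pt.toLaurent := by
      show (elt Pt.toLaurent (inv Pt.toLaurent) 0) 0 1 = _
      rw [elt_eq]
      simp
    have hx00 : (x0 : Loop) 0 0 = 0 := by
      show (elt Pt.toLaurent (inv Pt.toLaurent) 0) 0 0 = _
      rw [elt_eq]
      simp
    have hZ : ∀ y : OA, ⁅x0, y⁆ ∈ IP P :=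
      (part1 x0).mpr ⟨by rw [hx01], by rw [hx00]; exact dvd_zero _⟩
    have hPt_dvd : P.toLaurent ∣ Pt.toLaurent := by
      have h3 := mem_IP.mp (hc x0 hZ) 0 1
      rwa [hx01] at h3
    constructor
    · -- Even L
      have hdvd1 : (Dl 1)^L ∣ (Dl 1)^(2*(L/2)) * ((Dl (-1))^(2*(K/2)) * Pstar.toLaurent) := by
        rw [← hPtL]
        exact dvd_trans (by rw [hPL]; exact dvd_mul_right _ _) hPt_dvd
      have hle := pow_le_one_var hdvd1 (by
        rw [map_mul, map_pow, evalH_Dl, hev1S, hone]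
        exact mul_ne_zero (pow_ne_zero _ (by norm_num)) h1)
      rw [Nat.even_iff]; omega
    · -- Even K
      have hdvdm : (Dl (-1))^K ∣ (Dl (-1))^(2*(K/2)) * ((Dl 1)^(2*(L/2)) * Pstar.toLaurent) := by
        have h3 : (Dl (-1))^K ∣ P.toLaurent := by
          rw [hPL]; exact ⟨(Dl 1)^L * Pstar.toLaurent, by ring⟩
        have h4 := dvd_trans h3 hPt_dvd
        rwa [hPtL, show (Dl 1)^(2*(L/2)) * ((Dl (-1))^(2*(K/2)) * Pstar.toLaurent)
            = (Dl (-1))^(2*(K/2)) * ((Dl 1)^(2*(L/2)) * Pstar.toLaurent) by ring] at h4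
      have hle := pow_le_negone_var hdvdm (by
        rw [map_mul, map_pow, evalH_Dl, hevmS, hmone]
        exact mul_ne_zero (pow_ne_zero _ (by norm_num)) h2)
      rw [Nat.even_iff]; omega
  · rintro ⟨hEL, hEK⟩ x hx
    have e1 : 2*(L/2) = L := by rw [Nat.even_iff] at hEL; omega
    have e2 : 2*(K/2) = K := by rw [Nat.even_iff] at hEK; omega
    have hPteq : Pt = P := by rw [hPtdef, hPdef, e1, e2]
    obtain ⟨hp, hq⟩ := (part1 x).mp hx
    rw [hPteq] at hp
    obtain ⟨hx10, hx11, hx00i⟩ := coords x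
    have hx10' : (x:Loop) 1 0 = invert ((x:Loop) 0 1) := hx10
    have hinvP2 : invert P.toLaurent
        = (Polynomial.C e).toLaurent * (T (-(P.natDegree:ℤ)) * P.toLaurent) := by
      have h3 := congrArg (⇑(invert (R:=ℂ))) hePL
      rw [map_mul, map_mul, invert_T,
        show invert ((Polynomial.C e).toLaurent) = (Polynomial.C e).toLaurent by
          rw [Polynomial.toLaurent_C, invert_C],
        show invert (invert P.toLaurent) = P.toLaurent from involutive_invert _] at h3
      exact h3
    have hpbar : P.toLaurent ∣ invert ((x:Loop) 0 1) := by
      obtain ⟨s, hs⟩ := hp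
      rw [hs, map_mul, hinvP2]
      exact ⟨(Polynomial.C e).toLaurent * T (-(P.natDegree:ℤ)) * invert s, by ring⟩
    refine mem_IP.mpr ?_
    intro i j
    fin_cases i <;> fin_cases j
    · exact hq
    · exact hp
    · show P.toLaurent ∣ (x:Loop) 1 0
      rw [hx10']
      exact hpbar
    · show P.toLaurent ∣ (x:Loop) 1 1
      rw [hx11]
      exact dvd_neg.mpr hq


end Onsager
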